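/- Let p > 2. (a) For any real numbers 0 < m' < m there exists a constant C > 0 such that for all a, b ∈ ℝ, ∫_ℝ |Q(x−a)·Q(x−b)|^m dx ≤ C·e^(−m'·|a−b|). (b) For any m > 0 there exists a constant C > 0 such that for all a, b ∈ ℝ, ∫_ℝ |Q(x−a)|·|Q(x−b)|^(1+m) dx ≤ C·e^(−|a−b|). -/

import Mathlib

open MeasureTheory

/-- The ground state of the one-dimensional nonlinear Klein-Gordon equation. -/
noncomputable def Q (p : ℝ) (x : ℝ) : ℝ :=
  ((p + 1) / (2 * Real.cosh ((p - 1) / 2 * x) ^ 2)) ^ (1 / (p - 1))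

lemma exp_abs_le_two_cosh (t : ℝ) : Real.exp |t| ≤ 2 * Real.cosh t := by
  rw [Real.cosh_eq]
  rcases abs_cases t with ⟨h, _⟩ | ⟨h, _⟩ <;> rw [h] <;>
    nlinarith [Real.exp_pos t, Real.exp_pos (-t)]

lemma Q_pos {p : ℝ} (hp : 2 < p) (x : ℝ) : 0 < Q p x := by
  apply Real.rpow_pos_of_pos
  have h1 : 0 < Real.cosh ((p - 1) / 2 * x) := Real.cosh_pos _
  positivity

lemma Q_le {p : ℝ} (hp : 2 < p) (x : ℝ) :
    Q p x ≤ (2 * (p + 1)) ^ (1 / (p - 1)) * Real.exp (-|x|) := by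
  have hp1 : (0:ℝ) < p - 1 := by linarith
  have hc : 0 < Real.cosh ((p - 1) / 2 * x) := Real.cosh_pos _
  have h1 : Real.exp (|(p - 1) / 2 * x|) ≤ 2 * Real.cosh ((p - 1) / 2 * x) :=
    exp_abs_le_two_cosh _
  have habs : |(p - 1) / 2 * x| = (p - 1) / 2 * |x| := by
    rw [abs_mul, abs_of_pos (by positivity : (0:ℝ) < (p - 1) / 2)]
  have hE : 0 < Real.exp ((p - 1) * |x|) := Real.exp_pos _
  have he : Real.exp ((p - 1) * |x|) ≤ 4 * Real.cosh ((p - 1) / 2 * x) ^ 2 := by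
    have h2 : Real.exp (|(p - 1) / 2 * x|) ^ 2 ≤ (2 * Real.cosh ((p - 1) / 2 * x)) ^ 2 :=
      pow_le_pow_left₀ (Real.exp_pos _).le h1 2
    rw [← Real.exp_nat_mul] at h2
    calc Real.exp ((p - 1) * |x|) = Real.exp ((2:ℕ) * |(p - 1) / 2 * x|) := by
          rw [habs]; norm_num; ring_nf
      _ ≤ (2 * Real.cosh ((p - 1) / 2 * x)) ^ 2 := h2
      _ = 4 * Real.cosh ((p - 1) / 2 * x) ^ 2 := by ring
  have hbase : (p + 1) / (2 * Real.cosh ((p - 1) / 2 * x) ^ 2)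
      ≤ 2 * (p + 1) * Real.exp (-(p - 1) * |x|) := by
    rw [div_le_iff₀ (by positivity), neg_mul, Real.exp_neg]
    nlinarith [mul_inv_cancel₀ hE.ne',
      mul_nonneg (mul_nonneg (show (0:ℝ) ≤ p + 1 by linarith)
        (inv_nonneg.2 hE.le))
        (sub_nonneg.2 he)]
  calc Q p x ≤ (2 * (p + 1) * Real.exp (-(p - 1) * |x|)) ^ (1 / (p - 1)) :=
        Real.rpow_le_rpow (by positivity) hbase (by positivity)
    _ = (2 * (p + 1)) ^ (1 / (p - 1)) * Real.exp (-|x|) := by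
        rw [Real.mul_rpow (by positivity) (Real.exp_pos _).le, ← Real.exp_mul]
        congr 2
        field_simp

lemma integrable_exp_neg_abs {δ : ℝ} (hδ : 0 < δ) :
    Integrable (fun x : ℝ => Real.exp (-δ * |x|)) := by
  have hIoi : IntegrableOn (fun x : ℝ => Real.exp (-δ * |x|)) (Set.Ioi 0) := by
    apply (exp_neg_integrableOn_Ioi 0 hδ).congr_fun ?_ measurableSet_Ioi
    intro x hx
    simp [abs_of_pos (Set.mem_Ioi.mp hx)]
  have hIic : IntegrableOn (fun x : ℝ => Real.exp (-δ * |x|)) (Set.Iic 0) := by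
    rw [← Measure.map_neg_eq_self (volume : Measure ℝ)]
    let m : MeasurableEmbedding fun x : ℝ => -x := (Homeomorph.neg ℝ).measurableEmbedding
    rw [m.integrableOn_map_iff]
    simp_rw [Function.comp_def, abs_neg, Set.neg_preimage, Set.neg_Iic, neg_zero]
    exact Iff.mpr integrableOn_Ici_iff_integrableOn_Ioi hIoi
  have h := hIic.union hIoi
  rwa [Set.Iic_union_Ioi, integrableOn_univ] at h

theorem ground_state_product_bounds (p : ℝ) (hp : 2 < p) :
    (∀ m' m : ℝ, 0 < m' → m' < m →
      ∃ C > 0, ∀ a b : ℝ,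
        (∫ x : ℝ, |Q p (x - a) * Q p (x - b)| ^ m) ≤ C * Real.exp (-m' * |a - b|)) ∧
    (∀ m : ℝ, 0 < m →
      ∃ C > 0, ∀ a b : ℝ,
        (∫ x : ℝ, |Q p (x - a)| * |Q p (x - b)| ^ (1 + m)) ≤ C * Real.exp (-|a - b|)) := by
  set K : ℝ := (2 * (p + 1)) ^ (1 / (p - 1)) with hKdef
  have hK : 0 < K := Real.rpow_pos_of_pos (by linarith) _
  have hQle := Q_le hp
  have hQpos := Q_pos hp
  have htri : ∀ a b x : ℝ, |a - b| ≤ |x - a| + |x - b| := by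
    intro a b x
    calc |a - b| = |(a - x) + (x - b)| := by ring_nf
      _ ≤ |a - x| + |x - b| := abs_add_le _ _
      _ = |x - a| + |x - b| := by rw [abs_sub_comm a x]
  constructor
  · intro m' m hm' hmm'
    have hm : 0 < m := hm'.trans hmm'
    have hδ : 0 < m - m' := by linarith
    refine ⟨(K ^ 2) ^ m * ∫ x : ℝ, Real.exp (-(m - m') * |x|), ?_, ?_⟩
    · apply mul_pos (Real.rpow_pos_of_pos (by positivity) _)
      rw [integral_pos_iff_support_of_nonneg (fun x => (Real.exp_pos _).le)
        (integrable_exp_neg_abs hδ)]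
      have hs : Function.support (fun x : ℝ => Real.exp (-(m - m') * |x|)) = Set.univ := by
        ext x; simp [Function.mem_support, (Real.exp_pos _).ne']
      rw [hs]; simp
    · intro a b
      have key : ∀ x : ℝ, |Q p (x - a) * Q p (x - b)| ^ m ≤
          ((K ^ 2) ^ m * Real.exp (-m' * |a - b|)) * Real.exp (-(m - m') * |x - b|) := by
        intro x
        rw [abs_of_pos (mul_pos (hQpos _) (hQpos _))]
        have h2 : Q p (x - a) * Q p (x - b) ≤
            K ^ 2 * Real.exp (-(|x - a| + |x - b|)) := by
          calc Q p (x - a) * Q p (x - b)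
              ≤ (K * Real.exp (-|x - a|)) * (K * Real.exp (-|x - b|)) :=
                mul_le_mul (hQle _) (hQle _) (hQpos _).le (by positivity)
            _ = K ^ 2 * Real.exp (-(|x - a| + |x - b|)) := by
                rw [neg_add, Real.exp_add]; ring
        calc (Q p (x - a) * Q p (x - b)) ^ m
            ≤ (K ^ 2 * Real.exp (-(|x - a| + |x - b|))) ^ m :=
              Real.rpow_le_rpow (mul_pos (hQpos _) (hQpos _)).le h2 hm.le
          _ = (K ^ 2) ^ m * Real.exp (-(|x - a| + |x - b|) * m) := by
              rw [Real.mul_rpow (by positivity) (Real.exp_pos _).le, ← Real.exp_mul]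
          _ ≤ ((K ^ 2) ^ m * Real.exp (-m' * |a - b|)) * Real.exp (-(m - m') * |x - b|) := by
              rw [mul_assoc, ← Real.exp_add]
              apply mul_le_mul_of_nonneg_left _ (by positivity)
              apply Real.exp_le_exp.mpr
              nlinarith [htri a b x, abs_nonneg (x - a), abs_nonneg (x - b), abs_nonneg (a - b)]
      have hint : Integrable (fun x : ℝ =>
          ((K ^ 2) ^ m * Real.exp (-m' * |a - b|)) * Real.exp (-(m - m') * |x - b|)) :=
        (((integrable_exp_neg_abs hδ).comp_sub_right b)).const_mul _
      calc (∫ x : ℝ, |Q p (x - a) * Q p (x - b)| ^ m)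
          ≤ ∫ x : ℝ, ((K ^ 2) ^ m * Real.exp (-m' * |a - b|)) * Real.exp (-(m - m') * |x - b|) :=
            integral_mono_of_nonneg (Filter.Eventually.of_forall fun x =>
              Real.rpow_nonneg (abs_nonneg _) _) hint (Filter.Eventually.of_forall key)
        _ = ((K ^ 2) ^ m * ∫ x : ℝ, Real.exp (-(m - m') * |x|)) * Real.exp (-m' * |a - b|) := by
            rw [integral_const_mul,
              integral_sub_right_eq_self (fun y : ℝ => Real.exp (-(m - m') * |y|)) b]
            ring
  · intro m hm
    refine ⟨(K ^ 2 * K ^ m) * ∫ x : ℝ, Real.exp (-m * |x|), ?_, ?_⟩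
    · apply mul_pos (mul_pos (by positivity) (Real.rpow_pos_of_pos hK _))
      rw [integral_pos_iff_support_of_nonneg (fun x => (Real.exp_pos _).le)
        (integrable_exp_neg_abs hm)]
      have hs : Function.support (fun x : ℝ => Real.exp (-m * |x|)) = Set.univ := by
        ext x; simp [Function.mem_support, (Real.exp_pos _).ne']
      rw [hs]; simp
    · intro a b
      have key : ∀ x : ℝ, |Q p (x - a)| * |Q p (x - b)| ^ (1 + m) ≤
          ((K ^ 2 * K ^ m) * Real.exp (-|a - b|)) * Real.exp (-m * |x - b|) := by
        intro x
        rw [abs_of_pos (hQpos _), abs_of_pos (hQpos _)]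
        have hK1m : K ^ ((1:ℝ) + m) = K * K ^ m := by
          rw [Real.rpow_add hK, Real.rpow_one]
        have h2 : Q p (x - b) ^ (1 + m) ≤ (K * K ^ m) * Real.exp (-(1 + m) * |x - b|) := by
          calc Q p (x - b) ^ (1 + m) ≤ (K * Real.exp (-|x - b|)) ^ ((1:ℝ) + m) :=
                Real.rpow_le_rpow (hQpos _).le (hQle _) (by linarith)
            _ = (K * K ^ m) * Real.exp (-(1 + m) * |x - b|) := by
                rw [Real.mul_rpow hK.le (Real.exp_pos _).le, ← Real.exp_mul, hK1m]
                ring_nf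
        calc Q p (x - a) * Q p (x - b) ^ (1 + m)
            ≤ (K * Real.exp (-|x - a|)) * ((K * K ^ m) * Real.exp (-(1 + m) * |x - b|)) :=
              mul_le_mul (hQle _) h2 (Real.rpow_nonneg (hQpos _).le _) (by positivity)
          _ = (K ^ 2 * K ^ m) * Real.exp (-|x - a| + -(1 + m) * |x - b|) := by
              rw [Real.exp_add]; ring
          _ ≤ (K ^ 2 * K ^ m) * Real.exp (-|a - b| + -m * |x - b|) := by
              apply mul_le_mul_of_nonneg_left _ (by positivity)
              apply Real.exp_le_exp.mpr
              nlinarith [htri a b x, abs_nonneg (x - a), abs_nonneg (x - b), abs_nonneg (a - b)]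
          _ = ((K ^ 2 * K ^ m) * Real.exp (-|a - b|)) * Real.exp (-m * |x - b|) := by
              rw [Real.exp_add]; ring
      have hint : Integrable (fun x : ℝ =>
          ((K ^ 2 * K ^ m) * Real.exp (-|a - b|)) * Real.exp (-m * |x - b|)) :=
        (((integrable_exp_neg_abs hm).comp_sub_right b)).const_mul _
      calc (∫ x : ℝ, |Q p (x - a)| * |Q p (x - b)| ^ (1 + m))
          ≤ ∫ x : ℝ, ((K ^ 2 * K ^ m) * Real.exp (-|a - b|)) * Real.exp (-m * |x - b|) :=
            integral_mono_of_nonneg (Filter.Eventually.of_forall fun x =>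
              mul_nonneg (abs_nonneg _) (Real.rpow_nonneg (abs_nonneg _) _)) hint
              (Filter.Eventually.of_forall key)
        _ = ((K ^ 2 * K ^ m) * ∫ x : ℝ, Real.exp (-m * |x|)) * Real.exp (-|a - b|) := by
            rw [integral_const_mul,
              integral_sub_right_eq_self (fun y : ℝ => Real.exp (-m * |y|)) b]
            ring
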